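/- Let Ω ⊂ ℝⁿ be a bounded Lipschitz domain where the trace estimate holds with β(ε) = c/ε for small ε > 0 and some c > 0. Then, in the setting of the preceding form lower bound, min σ(A_[B]) ≥ ess inf a − (c/E)‖B₊‖² for ‖B₊‖ sufficiently large, where A_[B] is the self-adjoint operator associated with the form 𝔞_B. -/

import Mathlib

open scoped InnerProductSpace

/-- On a bounded Lipschitz domain the trace estimate holds with
`β(ε) = c/ε`; hence, in the setting of the Robin-form lower bound, the self-adjoint
operator `A_[B]` associated with the form `𝔞_B` satisfies
`min σ(A_[B]) ≥ ess inf a − (c/E) ‖B₊‖²` (for `‖B₊‖` sufficiently large, i.e. when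
`ε = E/‖B₊‖` is admissible).  By the variational principle this is expressed as the
corresponding lower bound of the numerical range of `A_[B]`. -/
theorem stmt18
    {V W H : Type*} [NormedAddCommGroup W] [InnerProductSpace ℂ W] [CompleteSpace W]
    [NormedAddCommGroup H] [InnerProductSpace ℂ H] [CompleteSpace H]
    (gradSq normSq a1 af : V → ℝ) (τ : V → W)
    (E a₀ ε₀ c : ℝ) (hE : 0 < E) (hc : 0 < c) (hε₀ : 0 < ε₀)
    (hg : ∀ f, 0 ≤ gradSq f) (hn : ∀ f, 0 ≤ normSq f)
    (hell : ∀ f, E * gradSq f ≤ a1 f)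
    (ha : ∀ f, a₀ * normSq f ≤ af f)
    -- trace estimate with β(ε) = c/ε
    (htrace : ∀ ε : ℝ, 0 < ε → ε ≤ ε₀ →
      ∀ f, ‖τ f‖ ^ 2 ≤ ε * gradSq f + (c / ε) * normSq f)
    (B Bp : W →L[ℂ] W) (hBsa : IsSelfAdjoint B) (hBpsa : IsSelfAdjoint Bp)
    (hBp_nn : ∀ w : W, 0 ≤ (⟪Bp w, w⟫_ℂ).re)
    (hBle : ∀ w : W, (⟪B w, w⟫_ℂ).re ≤ (⟪Bp w, w⟫_ℂ).re)
    (hBp0 : Bp ≠ 0)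
    -- ‖B₊‖ sufficiently large: ε = E/‖B₊‖ admissible
    (hadm : E / ‖Bp‖ ≤ ε₀)
    -- A_[B] : the self-adjoint operator associated with the form 𝔞_B
    (A : H →ₗ.[ℂ] H) (hAsa : IsSelfAdjoint A)
    (d : A.domain → V)
    (hd1 : ∀ f : A.domain, (⟪A f, (f : H)⟫_ℂ).re
      = a1 (d f) + af (d f) - (⟪B (τ (d f)), τ (d f)⟫_ℂ).re)
    (hd2 : ∀ f : A.domain, normSq (d f) = ‖(f : H)‖ ^ 2) :
    ∀ f : A.domain,
      (a₀ - (c / E) * ‖Bp‖ ^ 2) * ‖(f : H)‖ ^ 2 ≤ (⟪A f, (f : H)⟫_ℂ).re := by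
  intro f
  have hBpn : 0 < ‖Bp‖ := norm_pos_iff.mpr hBp0
  set g := d f with hg'
  set w := τ g with hw'
  have hε : (0:ℝ) < E / ‖Bp‖ := div_pos hE hBpn
  have htr := htrace (E / ‖Bp‖) hε hadm g
  have hB1 : (⟪B w, w⟫_ℂ).re ≤ ‖Bp‖ * ‖w‖ ^ 2 := by
    refine (hBle w).trans ?_
    calc (⟪Bp w, w⟫_ℂ).re ≤ ‖(⟪Bp w, w⟫_ℂ)‖ := Complex.re_le_norm _
      _ ≤ ‖Bp w‖ * ‖w‖ := norm_inner_le_norm _ _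
      _ ≤ ‖Bp‖ * ‖w‖ * ‖w‖ := by
          have := Bp.le_opNorm w
          nlinarith [norm_nonneg w]
      _ = ‖Bp‖ * ‖w‖ ^ 2 := by ring
  have key : ‖Bp‖ * ‖w‖ ^ 2 ≤ E * gradSq g + (c / E * ‖Bp‖ ^ 2) * normSq g := by
    have h1 : ‖Bp‖ * ‖w‖ ^ 2 ≤ ‖Bp‖ * ((E / ‖Bp‖) * gradSq g + (c / (E / ‖Bp‖)) * normSq g) := by
      exact mul_le_mul_of_nonneg_left htr hBpn.le
    have h2 : ‖Bp‖ * ((E / ‖Bp‖) * gradSq g + (c / (E / ‖Bp‖)) * normSq g)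
        = E * gradSq g + (c / E * ‖Bp‖ ^ 2) * normSq g := by
      field_simp
    linarith
  have h3 := hell g
  have h4 := ha g
  have h5 := hd1 f
  have h6 := hd2 f
  rw [h5, ← h6]
  nlinarith [hn g, hg g]
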